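/- Satisfiability implies matching: if a 3SAT instance (X, C) has a satisfying assignment, then the bipartite reduction graph G_{X,C} admits a connected matching of weight exactly |X| + |C| + 1, namely {h⁺h⁻} ∪ {c_i⁺c_i⁻ : c_i ∈ C} ∪ {x_i x_i⁺ : x_i true} ∪ {x_i x_i⁻ : x_i false}. -/
import Mathlib


open Finset Classical

/-- `M` is a matching of `G`: a finite set of edges of `G` that are pairwise disjoint. -/
def IsMatchingF {V : Type*} (G : SimpleGraph V) (M : Finset (Sym2 V)) : Prop :=
  (∀ e ∈ M, e ∈ G.edgeSet) ∧
    ∀ e ∈ M, ∀ f ∈ M, e ≠ f → ∀ v : V, ¬(v ∈ e ∧ v ∈ f)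

/-- The set of vertices saturated by the matching `M`. -/
def satSet {V : Type*} (M : Finset (Sym2 V)) : Set V := {v | ∃ e ∈ M, v ∈ e}

/-- Vertices of the bipartite reduction graph `G_{X,C}` for a 3SAT instance with `m`
variables and `q` clauses. -/
inductive BipV (m q : ℕ) : Type
  | hP | hN            -- the vertices `h⁺`, `h⁻`
  | var (i : Fin m)    -- the vertex `x_i`
  | varP (i : Fin m)   -- the vertex `x_i⁺`
  | varN (i : Fin m)   -- the vertex `x_i⁻`
  | clP (j : Fin q)    -- the vertex `c_j⁺`
  | clN (j : Fin q)    -- the vertex `c_j⁻`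
  deriving DecidableEq

instance (m q : ℕ) : Fintype (BipV m q) := by
  classical
  exact Fintype.ofSurjective
    (fun x : (Unit ⊕ Unit) ⊕ (Fin m ⊕ Fin m ⊕ Fin m) ⊕ (Fin q ⊕ Fin q) =>
      match x with
      | .inl (.inl _) => BipV.hP
      | .inl (.inr _) => BipV.hN
      | .inr (.inl (.inl i)) => BipV.var i
      | .inr (.inl (.inr (.inl i))) => BipV.varP i
      | .inr (.inl (.inr (.inr i))) => BipV.varN i
      | .inr (.inr (.inl j)) => BipV.clP j
      | .inr (.inr (.inr j)) => BipV.clN j)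
    (by intro v; cases v with
      | hP => exact ⟨.inl (.inl ()), rfl⟩
      | hN => exact ⟨.inl (.inr ()), rfl⟩
      | var i => exact ⟨.inr (.inl (.inl i)), rfl⟩
      | varP i => exact ⟨.inr (.inl (.inr (.inl i))), rfl⟩
      | varN i => exact ⟨.inr (.inl (.inr (.inr i))), rfl⟩
      | clP j => exact ⟨.inr (.inr (.inl j)), rfl⟩
      | clN j => exact ⟨.inr (.inr (.inr j)), rfl⟩)

/-- The weight `1` edges of the bipartite reduction graph: `h⁺h⁻`, `x_i⁺x_i`, `x_i x_i⁻`
and `c_j⁺c_j⁻`. -/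
def bipW1 (m q : ℕ) : Set (Sym2 (BipV m q)) :=
  {e | e = s(BipV.hP, BipV.hN) ∨
       (∃ i, e = s(BipV.var i, BipV.varP i)) ∨
       (∃ i, e = s(BipV.var i, BipV.varN i)) ∨
       (∃ j, e = s(BipV.clP j, BipV.clN j))}

/-- The edge set of the bipartite reduction graph `G_{X,C}`, where `cl j t` is the `t`-th
literal of clause `j`. -/
def bipEdges (m q : ℕ) (cl : Fin q → Fin 3 → Fin m × Bool) : Set (Sym2 (BipV m q)) :=
  {e | e = s(BipV.hP, BipV.hN) ∨
       (∃ i, e = s(BipV.var i, BipV.varP i) ∨ e = s(BipV.var i, BipV.varN i) ∨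
          e = s(BipV.var i, BipV.hP)) ∨
       (∃ j, e = s(BipV.clP j, BipV.clN j)) ∨
       (∃ (j : Fin q) (t : Fin 3), (cl j t).2 = true ∧
          e = s(BipV.clP j, BipV.varP (cl j t).1)) ∨
       (∃ (j : Fin q) (t : Fin 3), (cl j t).2 = false ∧
          e = s(BipV.clP j, BipV.varN (cl j t).1))}

/-- The bipartite reduction graph `G_{X,C}`. -/
def bipGraph (m q : ℕ) (cl : Fin q → Fin 3 → Fin m × Bool) : SimpleGraph (BipV m q) :=
  SimpleGraph.fromEdgeSet (bipEdges m q cl)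

/-- The edge weights of `G_{X,C}`: `1` on `bipW1`, `0` elsewhere. -/
noncomputable def bipWeight (m q : ℕ) : Sym2 (BipV m q) → ℤ :=
  fun e => if e ∈ bipW1 m q then 1 else 0

/-- The matching associated to an assignment `σ`:
`{h⁺h⁻} ∪ {c_j⁺c_j⁻ : j} ∪ {x_i x_i⁺ : σ i} ∪ {x_i x_i⁻ : ¬σ i}`. -/
def bipMatchingOf (m q : ℕ) (σ : Fin m → Bool) : Finset (Sym2 (BipV m q)) :=
  {s(BipV.hP, BipV.hN)} ∪
    (Finset.univ.image fun j : Fin q => s(BipV.clP j, BipV.clN j)) ∪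
    (Finset.univ.image fun i : Fin m =>
      if σ i then s(BipV.var i, BipV.varP i) else s(BipV.var i, BipV.varN i))


section Aux

variable {m q : ℕ}

lemma mem_bipMatchingOf {σ : Fin m → Bool} {e : Sym2 (BipV m q)} :
    e ∈ bipMatchingOf m q σ ↔
      e = s(BipV.hP, BipV.hN) ∨ (∃ j, e = s(BipV.clP j, BipV.clN j)) ∨
      (∃ i, e = if σ i then s(BipV.var i, BipV.varP i) else s(BipV.var i, BipV.varN i)) := by
  simp only [bipMatchingOf, Finset.mem_union, Finset.mem_singleton, Finset.mem_image,
    Finset.mem_univ, true_and, or_assoc]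
  constructor
  · rintro (h | ⟨j, h⟩ | ⟨i, h⟩)
    · exact Or.inl h
    · exact Or.inr (Or.inl ⟨j, h.symm⟩)
    · exact Or.inr (Or.inr ⟨i, h.symm⟩)
  · rintro (h | ⟨j, h⟩ | ⟨i, h⟩)
    · exact Or.inl h
    · exact Or.inr (Or.inl ⟨j, h.symm⟩)
    · exact Or.inr (Or.inr ⟨i, h.symm⟩)

lemma hP_hN_mem_edges (cl : Fin q → Fin 3 → Fin m × Bool) :
    (bipGraph m q cl).Adj BipV.hP BipV.hN := by
  rw [bipGraph, SimpleGraph.fromEdgeSet_adj]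
  exact ⟨Or.inl rfl, by simp⟩

lemma var_hP_adj (cl : Fin q → Fin 3 → Fin m × Bool) (i : Fin m) :
    (bipGraph m q cl).Adj (BipV.var i) BipV.hP := by
  rw [bipGraph, SimpleGraph.fromEdgeSet_adj]
  exact ⟨Or.inr (Or.inl ⟨i, Or.inr (Or.inr rfl)⟩), by simp⟩

lemma var_varP_adj (cl : Fin q → Fin 3 → Fin m × Bool) (i : Fin m) :
    (bipGraph m q cl).Adj (BipV.var i) (BipV.varP i) := by
  rw [bipGraph, SimpleGraph.fromEdgeSet_adj]
  exact ⟨Or.inr (Or.inl ⟨i, Or.inl rfl⟩), by simp⟩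

lemma var_varN_adj (cl : Fin q → Fin 3 → Fin m × Bool) (i : Fin m) :
    (bipGraph m q cl).Adj (BipV.var i) (BipV.varN i) := by
  rw [bipGraph, SimpleGraph.fromEdgeSet_adj]
  exact ⟨Or.inr (Or.inl ⟨i, Or.inr (Or.inl rfl)⟩), by simp⟩

lemma clP_clN_adj (cl : Fin q → Fin 3 → Fin m × Bool) (j : Fin q) :
    (bipGraph m q cl).Adj (BipV.clP j) (BipV.clN j) := by
  rw [bipGraph, SimpleGraph.fromEdgeSet_adj]
  exact ⟨Or.inr (Or.inr (Or.inl ⟨j, rfl⟩)), by simp⟩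

lemma clP_varP_adj (cl : Fin q → Fin 3 → Fin m × Bool) (j : Fin q) (t : Fin 3)
    (h : (cl j t).2 = true) :
    (bipGraph m q cl).Adj (BipV.clP j) (BipV.varP (cl j t).1) := by
  rw [bipGraph, SimpleGraph.fromEdgeSet_adj]
  exact ⟨Or.inr (Or.inr (Or.inr (Or.inl ⟨j, t, h, rfl⟩))), by simp⟩

lemma clP_varN_adj (cl : Fin q → Fin 3 → Fin m × Bool) (j : Fin q) (t : Fin 3)
    (h : (cl j t).2 = false) :
    (bipGraph m q cl).Adj (BipV.clP j) (BipV.varN (cl j t).1) := by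
  rw [bipGraph, SimpleGraph.fromEdgeSet_adj]
  exact ⟨Or.inr (Or.inr (Or.inr (Or.inr ⟨j, t, h, rfl⟩))), by simp⟩

end Aux

/-- Satisfiability implies matching: a satisfying assignment of the 3SAT instance yields
a connected matching of the bipartite reduction graph of weight exactly `|X| + |C| + 1`. -/
theorem bip_satisfiable_gives_connected_matching (m q : ℕ)
    (cl : Fin q → Fin 3 → Fin m × Bool) (σ : Fin m → Bool)
    (hσ : ∀ j : Fin q, ∃ t : Fin 3, σ (cl j t).1 = (cl j t).2) :
    IsMatchingF (bipGraph m q cl) (bipMatchingOf m q σ) ∧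
    ((bipGraph m q cl).induce (satSet (bipMatchingOf m q σ))).Connected ∧
    ∑ e ∈ bipMatchingOf m q σ, bipWeight m q e = (m : ℤ) + q + 1 := by
  classical
  set G := bipGraph m q cl with hG
  set M := bipMatchingOf m q σ with hMdef
  -- Part 1 : matching
  have hmatch : IsMatchingF G M := by
    constructor
    · intro e he
      rw [hMdef, mem_bipMatchingOf] at he
      rw [hG, bipGraph, SimpleGraph.edgeSet_fromEdgeSet]
      rcases he with h | ⟨j, h⟩ | ⟨i, h⟩
      · subst h
        exact ⟨Or.inl rfl, by simp⟩
      · subst h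
        exact ⟨Or.inr (Or.inr (Or.inl ⟨j, rfl⟩)), by simp⟩
      · by_cases hi : σ i <;> simp only [hi, if_true, if_false] at h <;> subst h
        · exact ⟨Or.inr (Or.inl ⟨i, Or.inl rfl⟩), by simp⟩
        · exact ⟨Or.inr (Or.inl ⟨i, Or.inr (Or.inl rfl)⟩), by simp⟩
    · intro e he f hf hef v hv
      obtain ⟨hv1, hv2⟩ := hv
      rw [hMdef, mem_bipMatchingOf] at he hf
      rcases he with h | ⟨j, h⟩ | ⟨i, h⟩ <;> rcases hf with h' | ⟨j', h'⟩ | ⟨i', h'⟩ <;>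
        subst h <;> subst h' <;>
        (try split_ifs at hv1 hv2 hef) <;>
        simp only [Sym2.mem_iff] at hv1 hv2 <;>
        rcases hv1 with rfl | rfl <;> rcases hv2 with h2 | h2 <;>
        simp_all
  refine ⟨hmatch, ?_, ?_⟩
  -- Part 2 : connectedness
  · have hhP : BipV.hP ∈ satSet M :=
      ⟨s(BipV.hP, BipV.hN), mem_bipMatchingOf.mpr (Or.inl rfl), by simp⟩
    have hhN : BipV.hN ∈ satSet M :=
      ⟨s(BipV.hP, BipV.hN), mem_bipMatchingOf.mpr (Or.inl rfl), by simp⟩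
    have hclP : ∀ j, BipV.clP j ∈ satSet M := fun j =>
      ⟨s(BipV.clP j, BipV.clN j), mem_bipMatchingOf.mpr (Or.inr (Or.inl ⟨j, rfl⟩)), by simp⟩
    have hclN : ∀ j, BipV.clN j ∈ satSet M := fun j =>
      ⟨s(BipV.clP j, BipV.clN j), mem_bipMatchingOf.mpr (Or.inr (Or.inl ⟨j, rfl⟩)), by simp⟩
    have hvar : ∀ i, BipV.var i ∈ satSet M := by
      intro i
      refine ⟨if σ i then s(BipV.var i, BipV.varP i) else s(BipV.var i, BipV.varN i),
        mem_bipMatchingOf.mpr (Or.inr (Or.inr ⟨i, rfl⟩)), ?_⟩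
      split_ifs <;> simp
    have hvarP : ∀ i, σ i = true → BipV.varP i ∈ satSet M := by
      intro i hi
      exact ⟨if σ i then s(BipV.var i, BipV.varP i) else s(BipV.var i, BipV.varN i),
        mem_bipMatchingOf.mpr (Or.inr (Or.inr ⟨i, rfl⟩)), by simp [hi]⟩
    have hvarN : ∀ i, σ i = false → BipV.varN i ∈ satSet M := by
      intro i hi
      exact ⟨if σ i then s(BipV.var i, BipV.varP i) else s(BipV.var i, BipV.varN i),
        mem_bipMatchingOf.mpr (Or.inr (Or.inr ⟨i, rfl⟩)), by simp [hi]⟩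
    have adj_ind : ∀ {a b : BipV m q} (ha : a ∈ satSet M) (hb : b ∈ satSet M),
        G.Adj a b → (G.induce (satSet M)).Adj ⟨a, ha⟩ ⟨b, hb⟩ := fun _ _ h => h
    have reach : ∀ v (hv : v ∈ satSet M),
        (G.induce (satSet M)).Reachable ⟨v, hv⟩ ⟨BipV.hP, hhP⟩ := by
      intro v hv
      cases v with
      | hP => rfl
      | hN => exact (adj_ind hhN hhP (hP_hN_mem_edges cl).symm).reachable
      | var i => exact (adj_ind (hvar i) hhP (var_hP_adj cl i)).reachable
      | varP i =>
        have hi : σ i = true := by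
          obtain ⟨e, he, hme⟩ := hv
          rw [mem_bipMatchingOf] at he
          rcases he with h | ⟨j, h⟩ | ⟨i', h⟩ <;> subst h <;>
            (try split_ifs at hme with hs) <;> simp_all
        exact ((adj_ind hv (hvar i) (var_varP_adj cl i).symm).reachable).trans
          ((adj_ind (hvar i) hhP (var_hP_adj cl i)).reachable)
      | varN i =>
        have hi : σ i = false := by
          obtain ⟨e, he, hme⟩ := hv
          rw [mem_bipMatchingOf] at he
          rcases he with h | ⟨j, h⟩ | ⟨i', h⟩ <;> subst h <;>
            (try split_ifs at hme with hs) <;> simp_all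
        exact ((adj_ind hv (hvar i) (var_varN_adj cl i).symm).reachable).trans
          ((adj_ind (hvar i) hhP (var_hP_adj cl i)).reachable)
      | clP j =>
        obtain ⟨t, ht⟩ := hσ j
        rcases hb : (cl j t).2 with _ | _
        · have hσi : σ (cl j t).1 = false := by rw [ht, hb]
          refine ((adj_ind hv (hvarN _ hσi) (clP_varN_adj cl j t hb)).reachable).trans ?_
          exact ((adj_ind _ (hvar _) (var_varN_adj cl (cl j t).1).symm).reachable).trans
            ((adj_ind (hvar _) hhP (var_hP_adj cl (cl j t).1)).reachable)
        · have hσi : σ (cl j t).1 = true := by rw [ht, hb]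
          refine ((adj_ind hv (hvarP _ hσi) (clP_varP_adj cl j t hb)).reachable).trans ?_
          exact ((adj_ind _ (hvar _) (var_varP_adj cl (cl j t).1).symm).reachable).trans
            ((adj_ind (hvar _) hhP (var_hP_adj cl (cl j t).1)).reachable)
      | clN j =>
        refine ((adj_ind hv (hclP j) (clP_clN_adj cl j).symm).reachable).trans ?_
        obtain ⟨t, ht⟩ := hσ j
        rcases hb : (cl j t).2 with _ | _
        · have hσi : σ (cl j t).1 = false := by rw [ht, hb]
          refine ((adj_ind (hclP j) (hvarN _ hσi) (clP_varN_adj cl j t hb)).reachable).trans ?_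
          exact ((adj_ind _ (hvar _) (var_varN_adj cl (cl j t).1).symm).reachable).trans
            ((adj_ind (hvar _) hhP (var_hP_adj cl (cl j t).1)).reachable)
        · have hσi : σ (cl j t).1 = true := by rw [ht, hb]
          refine ((adj_ind (hclP j) (hvarP _ hσi) (clP_varP_adj cl j t hb)).reachable).trans ?_
          exact ((adj_ind _ (hvar _) (var_varP_adj cl (cl j t).1).symm).reachable).trans
            ((adj_ind (hvar _) hhP (var_hP_adj cl (cl j t).1)).reachable)
    rw [SimpleGraph.connected_iff]
    exact ⟨fun a b => (reach a.1 a.2).trans (reach b.1 b.2).symm, ⟨⟨BipV.hP, hhP⟩⟩⟩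
  -- Part 3 : weight
  · have hw : ∀ e ∈ M, bipWeight m q e = 1 := by
      intro e he
      rw [hMdef, mem_bipMatchingOf] at he
      rcases he with h | ⟨j, h⟩ | ⟨i, h⟩
      · subst h; simp [bipWeight, bipW1]
      · subst h; simp [bipWeight, bipW1]
      · by_cases hi : σ i <;> simp only [hi, if_true, if_false] at h <;> subst h <;>
          simp [bipWeight, bipW1]
    rw [Finset.sum_congr rfl hw, Finset.sum_const, nsmul_eq_mul, mul_one]
    have hcard : M.card = 1 + q + m := by
      rw [hMdef, bipMatchingOf]
      rw [Finset.card_union_of_disjoint, Finset.card_union_of_disjoint]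
      · rw [Finset.card_singleton, Finset.card_image_of_injective, Finset.card_image_of_injective,
          Finset.card_univ, Finset.card_univ, Fintype.card_fin, Fintype.card_fin]
        · intro a b hab
          by_cases ha : σ a <;> by_cases hb : σ b <;> simp_all
        · intro a b hab
          simp_all
      · rw [Finset.disjoint_left]
        intro e he hf
        simp only [Finset.mem_singleton] at he
        simp only [Finset.mem_image, Finset.mem_univ, true_and] at hf
        obtain ⟨j, hj⟩ := hf
        subst he
        simp at hj
      · rw [Finset.disjoint_left]
        intro e he hf
        simp only [Finset.mem_union, Finset.mem_singleton, Finset.mem_image,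
          Finset.mem_univ, true_and] at he
        simp only [Finset.mem_image, Finset.mem_univ, true_and] at hf
        obtain ⟨i, hi⟩ := hf
        by_cases hs : σ i <;> simp only [hs, if_true, if_false] at hi <;> subst hi <;>
          rcases he with he | ⟨j, hj⟩ <;> simp_all
    rw [hcard]
    push_cast
    ring
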